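/- Let A be a real symmetric d×d matrix, λ ≥ 0, m ≤ d, and W₀ ∈ ℝ^{d×m}. Then the ordinary differential equation Ẇ(t) = 2(A − W(t)W(t)ᵀ)W(t) − 2λ W(t), W(0) = W₀, has a unique solution defined for all t ≥ 0, and the trajectory is bounded: sup_{t ≥ 0} ‖W(t)‖_F < ∞. -/

import Mathlib

open Matrix Set

/-- Frobenius norm of a real matrix. -/
noncomputable def frobNorm {n m : ℕ} (M : Matrix (Fin n) (Fin m) ℝ) : ℝ :=
  Real.sqrt (∑ i, ∑ j, (M i j) ^ 2)

namespace OjaAux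

open Matrix Set Metric
open scoped RealInnerProductSpace


attribute [local instance] Matrix.normedAddCommGroup Matrix.normedSpace

variable {d m : ℕ}

noncomputable def eqv (d m : ℕ) :
    EuclideanSpace ℝ (Fin d × Fin m) ≃L[ℝ] Matrix (Fin d) (Fin m) ℝ :=
  (EuclideanSpace.equiv _ ℝ).trans
    (LinearEquiv.curry ℝ ℝ (Fin d) (Fin m)).toContinuousLinearEquiv

lemma eqv_apply (x : EuclideanSpace ℝ (Fin d × Fin m)) (i : Fin d) (j : Fin m) :
    eqv d m x i j = x (i, j) := rfl

lemma eqv_symm_apply (M : Matrix (Fin d) (Fin m) ℝ) (p : Fin d × Fin m) :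
    (eqv d m).symm M p = M p.1 p.2 := rfl

noncomputable def eField (A : Matrix (Fin d) (Fin d) ℝ) (l : ℝ)
    (x : EuclideanSpace ℝ (Fin d × Fin m)) : EuclideanSpace ℝ (Fin d × Fin m) :=
  (eqv d m).symm ((2:ℝ) • ((A - (eqv d m x) * (eqv d m x)ᵀ) * (eqv d m x)) - (2 * l) • (eqv d m x))

lemma inner_eq_sum (x y : EuclideanSpace ℝ (Fin d × Fin m)) :
    ⟪x, y⟫ = ∑ i, ∑ j, (eqv d m x) i j * (eqv d m y) i j := by
  rw [PiLp.inner_apply, Fintype.sum_prod_type]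
  refine Finset.sum_congr rfl fun i _ => Finset.sum_congr rfl fun j _ => ?_
  simp [eqv_apply, mul_comm]

lemma norm_sq_eq (x : EuclideanSpace ℝ (Fin d × Fin m)) :
    ‖x‖ ^ 2 = ∑ i, ∑ j, (eqv d m x i j) ^ 2 := by
  rw [← real_inner_self_eq_norm_sq, inner_eq_sum]
  simp [sq]

lemma contDiff_coord (a : Fin d) (b : Fin m) :
    ContDiff ℝ 1 (fun M : Matrix (Fin d) (Fin m) ℝ => M a b) :=
  (ContinuousLinearMap.proj (R := ℝ) (φ := fun _ : Fin m => ℝ) b).contDiff.comp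
    (ContinuousLinearMap.proj (R := ℝ) (φ := fun _ : Fin d => Fin m → ℝ) a).contDiff

lemma mField_apply (A : Matrix (Fin d) (Fin d) ℝ) (l : ℝ)
    (M : Matrix (Fin d) (Fin m) ℝ) (i : Fin d) (j : Fin m) :
    (((2:ℝ) • ((A - M * Mᵀ) * M) - (2 * l) • M) : Matrix (Fin d) (Fin m) ℝ) i j
      = 2 * (∑ k, (A i k - ∑ r, M i r * M k r) * M k j) - (2*l) * M i j := by
  simp [Matrix.mul_apply, Matrix.sub_apply, Matrix.smul_apply, smul_eq_mul,
    Matrix.transpose_apply]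

lemma contDiff_mField (A : Matrix (Fin d) (Fin d) ℝ) (l : ℝ) :
    ContDiff ℝ 1 (fun M : Matrix (Fin d) (Fin m) ℝ =>
      ((2:ℝ) • ((A - M * Mᵀ) * M) - (2 * l) • M)) := by
  refine contDiff_pi.2 ?_; intro i; refine contDiff_pi.2 ?_; intro j
  have h : (fun M : Matrix (Fin d) (Fin m) ℝ =>
      ((2:ℝ) • ((A - M * Mᵀ) * M) - (2 * l) • M) i j)
      = fun M : Matrix (Fin d) (Fin m) ℝ =>
        2 * (∑ k, (A i k - ∑ r, M i r * M k r) * M k j) - (2*l) * M i j := by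
    funext M; exact mField_apply A l M i j
  rw [h]
  apply ContDiff.sub
  · apply ContDiff.mul contDiff_const
    apply ContDiff.sum
    intro k _
    exact (ContDiff.sub contDiff_const
      (ContDiff.sum fun r _ => (contDiff_coord i r).mul (contDiff_coord k r))).mul
      (contDiff_coord k j)
  · exact contDiff_const.mul (contDiff_coord i j)

lemma contDiff_eField (A : Matrix (Fin d) (Fin d) ℝ) (l : ℝ) :
    ContDiff ℝ 1 (eField (m := m) A l) :=
  ((eqv d m).symm.toContinuousLinearMap.contDiff.comp (contDiff_mField A l)).comp
    (eqv d m).toContinuousLinearMap.contDiff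

lemma exists_lip (A : Matrix (Fin d) (Fin d) ℝ) (l ρ : ℝ) :
    ∃ K : NNReal, LipschitzOnWith K (eField (m := m) A l)
      (closedBall (0 : EuclideanSpace ℝ (Fin d × Fin m)) ρ) := by
  have hF := contDiff_eField (m := m) A l
  have hc : ContinuousOn (fun x => fderiv ℝ (eField (m := m) A l) x)
      (closedBall (0 : EuclideanSpace ℝ (Fin d × Fin m)) ρ) :=
    (hF.continuous_fderiv one_ne_zero).continuousOn
  obtain ⟨C, hC⟩ := (isCompact_closedBall _ _).exists_bound_of_continuousOn hc
  refine ⟨⟨max C 0, le_max_right _ _⟩, ?_⟩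
  apply Convex.lipschitzOnWith_of_nnnorm_hasFDerivWithin_le
    (f' := fun x => fderiv ℝ (eField (m := m) A l) x)
    (fun x hx => ((hF.differentiable one_ne_zero) x).hasFDerivAt.hasFDerivWithinAt)
    ?_ (convex_closedBall _ _)
  intro x hx
  show ‖fderiv ℝ (eField (m := m) A l) x‖ ≤ max C 0
  exact le_trans (hC x hx) (le_max_left _ _)

lemma real_aux {R u v : ℝ} (hR : 0 < R) (hu : R < u) (hv : R < v) :
    |R * u⁻¹ - R * v⁻¹| * v ≤ |v - u| := by
  have hu0 : 0 < u := hR.trans hu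
  have hv0 : 0 < v := hR.trans hv
  have h : R * u⁻¹ - R * v⁻¹ = (R / (u * v)) * (v - u) := by field_simp
  rw [h, abs_mul, abs_of_pos (by positivity : (0:ℝ) < R / (u*v))]
  have h1 : R / (u * v) * |v - u| * v = (R / u) * |v - u| := by field_simp
  rw [h1]
  have h2 : R / u ≤ 1 := (div_le_one hu0).mpr hu.le
  nlinarith [abs_nonneg (v - u)]

lemma retr_lip {F : Type*} [NormedAddCommGroup F] [NormedSpace ℝ F] {R : ℝ} (hR : 0 < R) :
    LipschitzWith 2 (fun x : F => if ‖x‖ ≤ R then x else (R * ‖x‖⁻¹) • x) := by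
  have key : ∀ x y : F, ‖x‖ ≤ R → R < ‖y‖ →
      ‖x - (R * ‖y‖⁻¹) • y‖ ≤ 2 * ‖x - y‖ := by
    intro x y hx hy
    have hy0 : (0:ℝ) < ‖y‖ := lt_trans hR hy
    have h1 : x - (R * ‖y‖⁻¹) • y = (x - y) + (1 - R * ‖y‖⁻¹) • y := by
      rw [sub_smul, one_smul]; abel
    have h2 : ‖(1 - R * ‖y‖⁻¹) • y‖ = ‖y‖ - R := by
      rw [norm_smul, Real.norm_eq_abs, abs_of_nonneg, sub_mul, one_mul,
        mul_assoc, inv_mul_cancel₀ hy0.ne', mul_one]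
      have : R * ‖y‖⁻¹ ≤ 1 := by
        rw [mul_inv_le_iff₀ hy0, one_mul]; exact hy.le
      linarith
    calc ‖x - (R * ‖y‖⁻¹) • y‖ ≤ ‖x - y‖ + ‖(1 - R * ‖y‖⁻¹) • y‖ := by
          rw [h1]; exact norm_add_le _ _
      _ = ‖x - y‖ + (‖y‖ - R) := by rw [h2]
      _ ≤ ‖x - y‖ + (‖y‖ - ‖x‖) := by linarith
      _ ≤ ‖x - y‖ + ‖x - y‖ := by
          have := norm_sub_norm_le y x
          rw [norm_sub_rev y x] at this
          linarith
      _ = 2 * ‖x - y‖ := by ring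
  apply LipschitzWith.of_dist_le_mul
  intro x y
  simp only [dist_eq_norm]
  by_cases hx : ‖x‖ ≤ R <;> by_cases hy : ‖y‖ ≤ R <;>
    simp only [if_pos, if_neg, hx, hy, if_true, if_false]
  · have := norm_nonneg (x - y); push_cast; linarith
  · push_cast; exact key x y hx (not_le.mp hy)
  · push_cast
    rw [norm_sub_rev]
    have := key y x hy (not_le.mp hx)
    rw [norm_sub_rev y x] at this
    exact this
  · push_neg at hx hy
    have hx0 : (0:ℝ) < ‖x‖ := lt_trans hR hx
    have hy0 : (0:ℝ) < ‖y‖ := lt_trans hR hy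
    have h1 : (R * ‖x‖⁻¹) • x - (R * ‖y‖⁻¹) • y
        = (R * ‖x‖⁻¹) • (x - y) + ((R * ‖x‖⁻¹) - (R * ‖y‖⁻¹)) • y := by
      rw [smul_sub, sub_smul]; abel
    have hs1 : R * ‖x‖⁻¹ ≤ 1 := by
      rw [mul_inv_le_iff₀ hx0, one_mul]; exact hx.le
    have hs0 : 0 ≤ R * ‖x‖⁻¹ := by positivity
    have h2 : ‖((R * ‖x‖⁻¹) - (R * ‖y‖⁻¹)) • y‖ ≤ ‖x - y‖ := by
      rw [norm_smul, Real.norm_eq_abs]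
      calc |R * ‖x‖⁻¹ - R * ‖y‖⁻¹| * ‖y‖ ≤ |‖y‖ - ‖x‖| := real_aux hR hx hy
        _ ≤ ‖x - y‖ := by
            rw [norm_sub_rev]
            exact abs_norm_sub_norm_le y x
    push_cast
    calc ‖(R * ‖x‖⁻¹) • x - (R * ‖y‖⁻¹) • y‖
        ≤ ‖(R * ‖x‖⁻¹) • (x - y)‖ + ‖((R * ‖x‖⁻¹) - (R * ‖y‖⁻¹)) • y‖ := by
          rw [h1]; exact norm_add_le _ _
      _ ≤ 1 * ‖x - y‖ + ‖x - y‖ := by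
          apply add_le_add
          · rw [norm_smul, Real.norm_eq_abs, abs_of_nonneg hs0]
            exact mul_le_mul_of_nonneg_right hs1 (norm_nonneg _)
          · exact h2
      _ = 2 * ‖x - y‖ := by ring


lemma abs_mul_le_half (a b : ℝ) : |a * b| ≤ (a^2 + b^2)/2 := by
  rw [abs_mul]
  nlinarith [sq_nonneg (|a| - |b|), sq_abs a, sq_abs b, abs_nonneg a, abs_nonneg b]

lemma T1_le (A : Matrix (Fin d) (Fin d) ℝ) (W : Matrix (Fin d) (Fin m) ℝ) :
    ∑ i, ∑ j, W i j * (A * W) i j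
      ≤ (∑ i, ∑ k, |A i k|) * (∑ i, ∑ j, (W i j)^2) := by
  set q := ∑ i, ∑ j, (W i j)^2 with hq
  have hq0 : 0 ≤ q := Finset.sum_nonneg fun i _ => Finset.sum_nonneg fun j _ => sq_nonneg _
  have hrow : ∀ i : Fin d, ∑ j, (W i j)^2 ≤ q := by
    intro i
    exact Finset.single_le_sum (f := fun i => ∑ j, (W i j)^2)
      (fun i _ => Finset.sum_nonneg fun j _ => sq_nonneg _) (Finset.mem_univ i)
  have hS : ∀ i k : Fin d, |∑ j, W i j * W k j| ≤ q := by
    intro i k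
    calc |∑ j, W i j * W k j| ≤ ∑ j, |W i j * W k j| := Finset.abs_sum_le_sum_abs _ _
      _ ≤ ∑ j, ((W i j)^2 + (W k j)^2)/2 := Finset.sum_le_sum fun j _ => abs_mul_le_half _ _
      _ = ((∑ j, (W i j)^2) + (∑ j, (W k j)^2))/2 := by
          rw [← Finset.sum_add_distrib, Finset.sum_div]
      _ ≤ q := by
          have := hrow i; have := hrow k; linarith
  calc ∑ i, ∑ j, W i j * (A * W) i j
      = ∑ i, ∑ k, A i k * (∑ j, W i j * W k j) := by
        simp only [Matrix.mul_apply, Finset.mul_sum]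
        refine Finset.sum_congr rfl fun i _ => ?_
        rw [Finset.sum_comm]
        refine Finset.sum_congr rfl fun k _ => ?_
        refine Finset.sum_congr rfl fun j _ => ?_
        ring
    _ ≤ ∑ i, ∑ k, |A i k| * q := by
        refine Finset.sum_le_sum fun i _ => Finset.sum_le_sum fun k _ => ?_
        calc A i k * (∑ j, W i j * W k j) ≤ |A i k * (∑ j, W i j * W k j)| := le_abs_self _
          _ = |A i k| * |∑ j, W i j * W k j| := abs_mul _ _
          _ ≤ |A i k| * q := mul_le_mul_of_nonneg_left (hS i k) (abs_nonneg _)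
    _ = (∑ i, ∑ k, |A i k|) * q := by rw [Finset.sum_mul]; simp [Finset.sum_mul]

lemma sum_eq_trace (W : Matrix (Fin d) (Fin m) ℝ) (M : Matrix (Fin d) (Fin m) ℝ) :
    ∑ i, ∑ j, W i j * M i j = Matrix.trace (Wᵀ * M) := by
  simp only [Matrix.trace, Matrix.diag, Matrix.mul_apply, Matrix.transpose_apply]
  exact Finset.sum_comm

lemma T2_ge (hm0 : 0 < m) (W : Matrix (Fin d) (Fin m) ℝ) :
    (∑ i, ∑ j, (W i j)^2)^2 / m ≤ ∑ i, ∑ j, W i j * (W * Wᵀ * W) i j := by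
  set S := Wᵀ * W with hSdef
  have hSsymm : ∀ a b, S b a = S a b := by
    intro a b
    simp only [hSdef, Matrix.mul_apply, Matrix.transpose_apply]
    exact Finset.sum_congr rfl fun i _ => mul_comm _ _
  have h1 : ∑ i, ∑ j, W i j * (W * Wᵀ * W) i j = ∑ a, ∑ b, (S a b)^2 := by
    rw [sum_eq_trace]
    have : Wᵀ * (W * Wᵀ * W) = S * S := by
      rw [hSdef, Matrix.mul_assoc, Matrix.mul_assoc]
    rw [this]
    simp only [Matrix.trace, Matrix.diag, Matrix.mul_apply]
    refine Finset.sum_congr rfl fun a _ => Finset.sum_congr rfl fun b _ => ?_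
    rw [hSsymm a b, sq]
  have h2 : ∑ j, S j j = ∑ i, ∑ j, (W i j)^2 := by
    simp only [hSdef, Matrix.mul_apply, Matrix.transpose_apply, sq]
    exact Finset.sum_comm
  rw [h1, ← h2]
  have h3 : (∑ j, S j j)^2 ≤ (m : ℝ) * ∑ j, (S j j)^2 := by
    have := sq_sum_le_card_mul_sum_sq (s := (Finset.univ : Finset (Fin m))) (f := fun j => S j j)
    simpa using this
  have h4 : ∑ j, (S j j)^2 ≤ ∑ a, ∑ b, (S a b)^2 := by
    refine Finset.sum_le_sum fun a _ => ?_
    exact Finset.single_le_sum (f := fun b => (S a b)^2) (fun b _ => sq_nonneg _)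
      (Finset.mem_univ a)
  have hm' : (0:ℝ) < m := by exact_mod_cast hm0
  rw [div_le_iff₀ hm']
  calc (∑ j, S j j)^2 ≤ (m:ℝ) * ∑ j, (S j j)^2 := h3
    _ ≤ (m:ℝ) * ∑ a, ∑ b, (S a b)^2 := by
        exact mul_le_mul_of_nonneg_left h4 (by positivity)
    _ = (∑ a, ∑ b, (S a b)^2) * m := mul_comm _ _



lemma inner_field_smul_le (hm0 : 0 < m) (A : Matrix (Fin d) (Fin d) ℝ) {l : ℝ} (hl : 0 ≤ l)
    (x : EuclideanSpace ℝ (Fin d × Fin m)) {c : ℝ} (hc0 : 0 < c) (hc1 : c ≤ 1) :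
    ⟪x, eField A l (c • x)⟫ ≤ 2 * c * ‖x‖^2 * ((∑ i, ∑ k, |A i k|) - c^2 * ‖x‖^2 / m) := by
  set W := eqv d m x with hW
  have hsmul : eqv d m (c • x) = c • W := by rw [_root_.map_smul]
  have hEq : eqv d m (eField A l (c • x))
      = (2:ℝ) • ((A - (c•W) * (c•W)ᵀ) * (c•W)) - (2*l) • (c•W) := by
    rw [eField, (eqv d m).apply_symm_apply, hsmul]
  have hptwise : ∀ (i : Fin d) (j : Fin m), W i j *
      (((2:ℝ) • ((A - (c•W) * (c•W)ᵀ) * (c•W)) - (2*l) • (c•W)) i j)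
      = 2*c*(W i j * (A*W) i j) - 2*c^3*(W i j * (W*Wᵀ*W) i j) - 2*l*c*(W i j)^2 := by
    intro i j
    rw [mField_apply]
    have e1 : ∀ k, ∑ r, (c•W) i r * (c•W) k r = c^2 * ∑ r, W i r * W k r := by
      intro k
      rw [Finset.mul_sum]
      refine Finset.sum_congr rfl fun r _ => ?_
      simp only [Matrix.smul_apply, smul_eq_mul]
      ring
    have e2 : (∑ k, (A i k - ∑ r, (c•W) i r * (c•W) k r) * (c•W) k j)
        = c * (A*W) i j - c^3 * ((W*Wᵀ*W) i j) := by
      have estep : ∀ k, (A i k - ∑ r, (c•W) i r * (c•W) k r) * (c•W) k j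
          = c * (A i k * W k j) - c^3 * ((∑ r, W i r * W k r) * W k j) := by
        intro k
        rw [e1 k]
        simp only [Matrix.smul_apply, smul_eq_mul]
        ring
      have hAW : (A*W) i j = ∑ k, A i k * W k j := Matrix.mul_apply
      have hWWW : (W*Wᵀ*W) i j = ∑ k, (∑ r, W i r * W k r) * W k j := by
        simp [Matrix.mul_apply, Matrix.transpose_apply]
      rw [Finset.sum_congr rfl fun k _ => estep k, Finset.sum_sub_distrib,
        ← Finset.mul_sum, ← Finset.mul_sum, hAW, hWWW]
    rw [e2]
    simp only [Matrix.smul_apply, smul_eq_mul]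
    ring
  have hinner : ⟪x, eField A l (c • x)⟫
      = 2*c*(∑ i, ∑ j, W i j * (A*W) i j) - 2*c^3*(∑ i, ∑ j, W i j * (W*Wᵀ*W) i j)
        - 2*l*c*(∑ i, ∑ j, (W i j)^2) := by
    rw [inner_eq_sum, hEq]
    rw [Finset.sum_congr rfl fun i _ => Finset.sum_congr rfl fun j _ => hptwise i j]
    simp only [Finset.sum_sub_distrib, Finset.mul_sum]
  set q := ∑ i, ∑ j, (W i j)^2 with hqdef
  have hq0 : 0 ≤ q := Finset.sum_nonneg fun i _ => Finset.sum_nonneg fun j _ => sq_nonneg _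
  have hnx : ‖x‖^2 = q := norm_sq_eq x
  have hT1 : ∑ i, ∑ j, W i j * (A*W) i j ≤ (∑ i, ∑ k, |A i k|) * q := T1_le A W
  have hT2 : q^2 / m ≤ ∑ i, ∑ j, W i j * (W*Wᵀ*W) i j := T2_ge hm0 W
  rw [hinner, hnx]
  have h1 : 2*c*(∑ i, ∑ j, W i j * (A*W) i j) ≤ 2*c*((∑ i, ∑ k, |A i k|) * q) :=
    mul_le_mul_of_nonneg_left hT1 (by positivity)
  have h2 : 2*c^3*(q^2/m) ≤ 2*c^3*(∑ i, ∑ j, W i j * (W*Wᵀ*W) i j) :=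
    mul_le_mul_of_nonneg_left hT2 (by positivity)
  have h3 : 0 ≤ 2*l*c*q := by positivity
  have hrhs : 2 * c * q * ((∑ i, ∑ k, |A i k|) - c^2 * q / m)
      = 2*c*((∑ i, ∑ k, |A i k|) * q) - 2*c^3*(q^2/m) := by
    field_simp
  rw [hrhs]
  linarith


lemma coords_to_deriv (A : Matrix (Fin d) (Fin d) ℝ) (l : ℝ)
    (V : ℝ → Matrix (Fin d) (Fin m) ℝ) (s : ℝ)
    (h : ∀ i j, HasDerivWithinAt (fun u => V u i j)
      (((2:ℝ) • ((A - V s * (V s)ᵀ) * V s) - (2 * l) • V s) i j) (Ici 0) s) :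
    HasDerivWithinAt (fun u => (eqv d m).symm (V u))
      (eField A l ((eqv d m).symm (V s))) (Ici 0) s := by
  have hmat : HasDerivWithinAt V
      ((2:ℝ) • ((A - V s * (V s)ᵀ) * V s) - (2 * l) • V s) (Ici 0) s := by
    refine hasDerivWithinAt_pi.2 ?_
    intro i
    refine hasDerivWithinAt_pi.2 ?_
    intro j
    exact h i j
  exact ((eqv d m).symm.toContinuousLinearMap.hasFDerivAt.comp_hasDerivWithinAt s hmat)

lemma deriv_to_coords (A : Matrix (Fin d) (Fin d) ℝ) (l : ℝ)
    (x : ℝ → EuclideanSpace ℝ (Fin d × Fin m)) (t : ℝ)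
    (hD : HasDerivWithinAt x (eField A l (x t)) (Ici 0) t) (i : Fin d) (j : Fin m) :
    HasDerivWithinAt (fun s => eqv d m (x s) i j)
      (((2:ℝ) • ((A - eqv d m (x t) * (eqv d m (x t))ᵀ) * eqv d m (x t))
        - (2 * l) • eqv d m (x t)) i j) (Ici 0) t := by
  have h2 := (EuclideanSpace.proj ((i, j) : Fin d × Fin m)).hasFDerivAt.comp_hasDerivWithinAt t hD
  exact h2

lemma uniq (A : Matrix (Fin d) (Fin d) ℝ) (l : ℝ)
    (x y : ℝ → EuclideanSpace ℝ (Fin d × Fin m))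
    (hx : ∀ t ∈ Ici (0:ℝ), HasDerivWithinAt x (eField A l (x t)) (Ici 0) t)
    (hy : ∀ t ∈ Ici (0:ℝ), HasDerivWithinAt y (eField A l (y t)) (Ici 0) t)
    (h0 : x 0 = y 0) : ∀ t ∈ Ici (0:ℝ), x t = y t := by
  intro t ht
  have hxc : ContinuousOn x (Icc 0 t) := fun s hs =>
    ((hx s hs.1).continuousWithinAt).mono (fun u hu => hu.1)
  have hyc : ContinuousOn y (Icc 0 t) := fun s hs =>
    ((hy s hs.1).continuousWithinAt).mono (fun u hu => hu.1)
  obtain ⟨ρ₁, hρ₁⟩ := (isCompact_Icc (a := (0:ℝ)) (b := t)).exists_bound_of_continuousOn hxc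
  obtain ⟨ρ₂, hρ₂⟩ := (isCompact_Icc (a := (0:ℝ)) (b := t)).exists_bound_of_continuousOn hyc
  obtain ⟨K, hK⟩ := exists_lip (m := m) A l (max ρ₁ ρ₂)
  have := ODE_solution_unique_of_mem_Icc_right (v := fun _ z => eField A l z)
    (s := fun _ => closedBall 0 (max ρ₁ ρ₂)) (K := K) (a := 0) (b := t) (fun _ _ => hK)
    hxc
    (fun s hs => (hx s hs.1).mono (Ici_subset_Ici.mpr hs.1))
    (fun s hs => mem_closedBall_zero_iff.mpr
      (le_trans (hρ₁ s (Ico_subset_Icc_self hs)) (le_max_left _ _)))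
    hyc
    (fun s hs => (hy s hs.1).mono (Ici_subset_Ici.mpr hs.1))
    (fun s hs => mem_closedBall_zero_iff.mpr
      (le_trans (hρ₂ s (Ico_subset_Icc_self hs)) (le_max_right _ _)))
    h0
  exact this (right_mem_Icc.mpr ht)

lemma invariance {B : ℝ} {g G : ℝ → ℝ}
    (hgD : ∀ t ∈ Ici (0:ℝ), HasDerivWithinAt g (G t) (Ici 0) t)
    (hkey : ∀ t ∈ Ici (0:ℝ), B ≤ g t → G t ≤ 0)
    (hg0 : g 0 < B) : ∀ t ∈ Ici (0:ℝ), g t ≤ B := by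
  have hgc : ContinuousOn g (Ici 0) := fun s hs => (hgD s hs).continuousWithinAt
  intro t1 ht1
  by_contra hgt
  push_neg at hgt
  set Kc := Icc (0:ℝ) t1 ∩ g ⁻¹' (Iic B) with hKc
  have hKclosed : IsClosed Kc :=
    (hgc.mono Icc_subset_Ici_self).preimage_isClosed_of_isClosed isClosed_Icc isClosed_Iic
  have hKcomp : IsCompact Kc := IsCompact.of_isClosed_subset isCompact_Icc hKclosed
    inter_subset_left
  have hKne : Kc.Nonempty := ⟨0, ⟨le_rfl, ht1⟩, by
    simp only [mem_preimage, mem_Iic]; exact hg0.le⟩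
  have hex : ∃ s₀ ∈ Kc, ∀ s ∈ Kc, s ≤ s₀ :=
    ⟨sSup Kc, hKcomp.sSup_mem hKne, fun s hs => le_csSup hKcomp.bddAbove hs⟩
  obtain ⟨s₀, ⟨⟨hs₀0, hs₀t1⟩, hs₀g'⟩, hs₀max⟩ := hex
  have hs₀g : g s₀ ≤ B := hs₀g'
  have hs₀lt : s₀ < t1 := lt_of_le_of_ne hs₀t1 (by
    rintro rfl
    exact absurd hs₀g (not_le.mpr hgt))
  have hgt' : ∀ s, s₀ < s → s ≤ t1 → B < g s := by
    intro s hs hst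
    by_contra h
    push_neg at h
    have hmem : s ∈ Kc := ⟨⟨le_trans hs₀0 hs.le, hst⟩, h⟩
    have := hs₀max s hmem
    linarith
  have hant : AntitoneOn g (Icc s₀ t1) := by
    apply antitoneOn_of_deriv_nonpos (convex_Icc _ _)
    · exact hgc.mono (fun u hu => le_trans hs₀0 hu.1)
    · intro s hs
      rw [interior_Icc] at hs
      have hs0 : 0 < s := lt_of_le_of_lt hs₀0 hs.1
      exact ((hgD s hs0.le).hasDerivAt (Ici_mem_nhds hs0)).differentiableAt.differentiableWithinAt
    · intro s hs
      rw [interior_Icc] at hs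
      have hs0 : 0 < s := lt_of_le_of_lt hs₀0 hs.1
      have hd := (hgD s hs0.le).hasDerivAt (Ici_mem_nhds hs0)
      rw [hd.deriv]
      exact hkey s hs0.le (hgt' s hs.1 hs.2.le).le
  have hfinal := hant (left_mem_Icc.mpr hs₀lt.le) (right_mem_Icc.mpr hs₀lt.le) hs₀lt.le
  linarith

lemma main (hm0 : 0 < m) (A : Matrix (Fin d) (Fin d) ℝ) {l : ℝ} (hl : 0 ≤ l)
    (x₀ : EuclideanSpace ℝ (Fin d × Fin m)) :
    ∃ x : ℝ → EuclideanSpace ℝ (Fin d × Fin m), x 0 = x₀ ∧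
      (∀ t ∈ Ici (0:ℝ), HasDerivWithinAt x (eField A l (x t)) (Ici 0) t) ∧
      (∀ t ∈ Ici (0:ℝ), ‖x t‖^2 ≤ max (‖x₀‖^2 + 1) (m * (∑ i, ∑ k, |A i k|))) := by
  set a := ∑ i, ∑ k, |A i k| with ha
  have ha0 : 0 ≤ a := Finset.sum_nonneg fun _ _ => Finset.sum_nonneg fun _ _ => abs_nonneg _
  set B := max (‖x₀‖^2 + 1) (m * a) with hBdef
  have hB0 : 0 < B := lt_of_lt_of_le (by positivity) (le_max_left _ _)
  have hBa : m * a ≤ B := le_max_right _ _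
  have hx₀B : ‖x₀‖^2 < B := lt_of_lt_of_le (lt_add_one _) (le_max_left _ _)
  set R := Real.sqrt B with hRdef
  have hR0 : 0 < R := Real.sqrt_pos.mpr hB0
  have hRsq : R^2 = B := Real.sq_sqrt hB0.le
  set retr : EuclideanSpace ℝ (Fin d × Fin m) → EuclideanSpace ℝ (Fin d × Fin m) :=
    fun z => if ‖z‖ ≤ R then z else (R * ‖z‖⁻¹) • z with hretrdef
  have hretr_mem : ∀ z, ‖retr z‖ ≤ R := by
    intro z
    by_cases h : ‖z‖ ≤ R
    · rw [hretrdef]; simpa [h] using h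
    · push_neg at h
      have hz0 : (0:ℝ) < ‖z‖ := hR0.trans h
      rw [hretrdef]
      simp only [if_neg (not_le.mpr h)]
      rw [norm_smul, Real.norm_eq_abs, abs_of_nonneg (by positivity),
        mul_assoc, inv_mul_cancel₀ hz0.ne', mul_one]
  have hretr_eq : ∀ z, ‖z‖ ≤ R → retr z = z := by
    intro z h; rw [hretrdef]; simp [h]
  set FC := fun z => eField A l (retr z) with hFCdef
  obtain ⟨K₀, hK₀⟩ := exists_lip (m := m) A l R
  have hFClip : LipschitzWith (K₀ * 2) FC := by
    have h2 : LipschitzWith 2 retr := retr_lip hR0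
    have hmap : MapsTo retr univ (closedBall (0 : EuclideanSpace ℝ (Fin d × Fin m)) R) :=
      fun z _ => mem_closedBall_zero_iff.mpr (hretr_mem z)
    rw [← lipschitzOnWith_univ]
    exact hK₀.comp h2.lipschitzOnWith hmap
  have hEcont : Continuous (eField (m := m) A l) := (contDiff_eField A l).continuous
  obtain ⟨C₀, hC₀⟩ := (isCompact_closedBall (0 : EuclideanSpace ℝ (Fin d × Fin m))
    R).exists_bound_of_continuousOn hEcont.continuousOn
  set C := max C₀ 0 with hCdef
  have hC : ∀ z, ‖FC z‖ ≤ C := fun z =>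
    le_trans (hC₀ _ (mem_closedBall_zero_iff.mpr (hretr_mem z))) (le_max_left _ _)
  have hCpos : (0:ℝ) ≤ C := le_max_right _ _
  have hPn : ∀ n : ℕ, ∃ f : ℝ → EuclideanSpace ℝ (Fin d × Fin m), f 0 = x₀ ∧
      ∀ t ∈ Icc (0:ℝ) (n+1), HasDerivWithinAt f (FC (f t)) (Icc (0:ℝ) (n+1)) t := by
    intro n
    have hpl : IsPicardLindelof (fun _ z => FC z) (tmin := 0) (tmax := (n:ℝ)+1)
        ⟨0, ⟨le_rfl, by positivity⟩⟩ x₀ ⟨C*((n:ℝ)+1), by positivity⟩ 0 ⟨C, hCpos⟩ (K₀*2) :=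
      { lipschitzOnWith := fun t _ => hFClip.lipschitzOnWith
        continuousOn := fun z _ => continuousOn_const
        norm_le := fun t _ z _ => hC z
        mul_max_le := by
          show C * max ((n:ℝ)+1 - 0) (0 - 0) ≤ C*((n:ℝ)+1) - 0
          rw [sub_zero, sub_zero, sub_zero]
          rw [max_eq_left (by positivity : (0:ℝ) ≤ (n:ℝ)+1)] }
    obtain ⟨α, hα0, hα⟩ := hpl.exists_eq_forall_mem_Icc_hasDerivWithinAt₀
    exact ⟨α, hα0, hα⟩
  choose Wn hWn0 hWnD using hPn
  have hcons : ∀ n k : ℕ, n ≤ k → Set.EqOn (Wn n) (Wn k) (Icc (0:ℝ) ((n:ℝ)+1)) := by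
    intro n k hnk
    have hnk' : ((n:ℝ)+1) ≤ ((k:ℝ)+1) := by
      have : (n:ℝ) ≤ (k:ℝ) := by exact_mod_cast hnk
      linarith
    apply ODE_solution_unique (v := fun _ z => FC z) (K := K₀*2) (fun _ => hFClip)
    · exact fun s hs => (hWnD n s hs).continuousWithinAt
    · intro s hs
      exact (hWnD n s (Ico_subset_Icc_self hs)).mono_of_mem_nhdsWithin
        (Filter.mem_of_superset (Icc_mem_nhdsGE_of_mem ⟨le_rfl, hs.2⟩)
          (Icc_subset_Icc_left hs.1))
    · exact fun s hs => ((hWnD k s ⟨hs.1, le_trans hs.2 hnk'⟩).continuousWithinAt).mono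
        (Icc_subset_Icc_right hnk')
    · intro s hs
      exact (hWnD k s ⟨hs.1, le_trans hs.2.le hnk'⟩).mono_of_mem_nhdsWithin
        (Filter.mem_of_superset (Icc_mem_nhdsGE_of_mem ⟨le_rfl, lt_of_lt_of_le hs.2 hnk'⟩)
          (Icc_subset_Icc_left hs.1))
    · exact (hWn0 n).trans (hWn0 k).symm
  set x := fun t : ℝ => Wn (Nat.ceil t) t with hxdef
  have hxW : ∀ t : ℝ, 0 ≤ t → ∀ n : ℕ, t ≤ (n:ℝ)+1 → x t = Wn n t := by
    intro t ht n htn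
    have hceil : t ≤ ((Nat.ceil t : ℕ):ℝ) + 1 := le_trans (Nat.le_ceil t) (by linarith)
    rcases le_total (Nat.ceil t) n with h | h
    · exact hcons _ _ h ⟨ht, hceil⟩
    · exact (hcons _ _ h ⟨ht, htn⟩).symm
  have hx0 : x 0 = x₀ := by
    rw [hxdef]
    show Wn (Nat.ceil (0:ℝ)) 0 = x₀
    rw [Nat.ceil_zero]
    exact hWn0 0
  have hxD : ∀ t ∈ Ici (0:ℝ), HasDerivWithinAt x (FC (x t)) (Ici 0) t := by
    intro t ht
    set N := Nat.ceil t with hN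
    have htN : t < (N:ℝ)+1 := lt_of_le_of_lt (Nat.le_ceil t) (by linarith)
    have hmem : Ici (0:ℝ) ∩ Iio ((N:ℝ)+1) ∈ nhdsWithin t (Ici (0:ℝ)) :=
      Filter.inter_mem self_mem_nhdsWithin (mem_nhdsWithin_of_mem_nhds (Iio_mem_nhds htN))
    have hmem2 : Icc (0:ℝ) ((N:ℝ)+1) ∈ nhdsWithin t (Ici (0:ℝ)) :=
      Filter.mem_of_superset hmem (fun s hs => ⟨hs.1, hs.2.le⟩)
    have hD : HasDerivWithinAt (Wn N) (FC (Wn N t)) (Ici 0) t :=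
      (hWnD N t ⟨ht, htN.le⟩).mono_of_mem_nhdsWithin hmem2
    have heq : x =ᶠ[nhdsWithin t (Ici (0:ℝ))] Wn N :=
      Filter.eventuallyEq_of_mem hmem (fun s hs => hxW s hs.1 N hs.2.le)
    exact hD.congr_of_eventuallyEq heq rfl
  have hkey : ∀ z : EuclideanSpace ℝ (Fin d × Fin m), B ≤ ‖z‖^2 → ⟪z, FC z⟫ ≤ 0 := by
    intro z hz
    have hzR : R ≤ ‖z‖ := by
      have := Real.sqrt_le_sqrt hz
      rwa [Real.sqrt_sq (norm_nonneg z)] at this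
    have hz0 : (0:ℝ) < ‖z‖ := lt_of_lt_of_le hR0 hzR
    set c : ℝ := if ‖z‖ ≤ R then 1 else R * ‖z‖⁻¹ with hcdef
    have hrc : retr z = c • z := by
      rw [hretrdef, hcdef]
      by_cases h : ‖z‖ ≤ R <;> simp [h]
    have hc0 : 0 < c := by
      rw [hcdef]
      split_ifs with h
      · norm_num
      · positivity
    have hc1 : c ≤ 1 := by
      rw [hcdef]
      by_cases h : ‖z‖ ≤ R
      · simp [h]
      · simp only [h, if_false]
        rw [mul_inv_le_iff₀ hz0, one_mul]
        exact hzR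
    have hcq : c^2 * ‖z‖^2 = R^2 := by
      rw [hcdef]
      by_cases h : ‖z‖ ≤ R
      · have : ‖z‖ = R := le_antisymm h hzR
        simp [this]
      · simp only [h, if_false]
        field_simp
    have hb := inner_field_smul_le hm0 A hl z hc0 hc1
    have hFCz : ⟪z, FC z⟫ = ⟪z, eField A l (c • z)⟫ := by
      show ⟪z, eField A l (retr z)⟫ = _
      rw [hrc]
    have hm' : (0:ℝ) < m := by exact_mod_cast hm0
    have hnonpos : a - c^2*‖z‖^2/m ≤ 0 := by
      rw [hcq, hRsq, sub_nonpos, le_div_iff₀ hm']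
      linarith
    have hfin : 2*c*‖z‖^2*(a - c^2*‖z‖^2/m) ≤ 0 :=
      mul_nonpos_of_nonneg_of_nonpos (by positivity) hnonpos
    rw [hFCz]
    exact le_trans hb hfin
  set g := fun t => ⟪x t, x t⟫ with hgdef
  have hgD : ∀ t ∈ Ici (0:ℝ), HasDerivWithinAt g (2 * ⟪x t, FC (x t)⟫) (Ici 0) t := by
    intro t ht
    have h := HasDerivWithinAt.inner ℝ (hxD t ht) (hxD t ht)
    refine h.congr_deriv ?_
    rw [real_inner_comm]
    ring
  have hinv : ∀ t ∈ Ici (0:ℝ), g t ≤ B := by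
    apply invariance hgD
    · intro s hs hBs
      have hgs : g s = ‖x s‖^2 := real_inner_self_eq_norm_sq (x s)
      rw [hgs] at hBs
      have := hkey (x s) hBs
      linarith
    · have hg00 : g 0 = ‖x₀‖^2 := by
        have : g 0 = ‖x 0‖^2 := real_inner_self_eq_norm_sq (x 0)
        rw [this, hx0]
      rw [hg00]
      exact hx₀B
  have hnorm : ∀ t ∈ Ici (0:ℝ), ‖x t‖^2 ≤ B := by
    intro t ht
    have h1 := hinv t ht
    have hgs : g t = ‖x t‖^2 := real_inner_self_eq_norm_sq (x t)
    rwa [hgs] at h1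
  refine ⟨x, hx0, ?_, ?_⟩
  · intro t ht
    have hb : ‖x t‖ ≤ R := by
      have h1 := Real.sqrt_le_sqrt (hnorm t ht)
      rwa [Real.sqrt_sq (norm_nonneg _)] at h1
    have hFCeq : FC (x t) = eField A l (x t) := by
      show eField A l (retr (x t)) = _
      rw [hretr_eq _ hb]
    rw [← hFCeq]
    exact hxD t ht
  · exact hnorm

end OjaAux

open OjaAux in
/-- **Global well-posedness and boundedness of the regularized Oja flow.** Let `A` be a
real symmetric `d × d` matrix, `l ≥ 0`, `m ≤ d` and `W0 ∈ ℝ^{d×m}`. Then the ODE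
`Ẇ = 2(A - WWᵀ)W - 2lW`, `W(0) = W0`, has a unique solution defined for all `t ≥ 0`
(derivatives understood entrywise, within `[0, ∞)`), and the trajectory is bounded in
Frobenius norm. -/
theorem regularized_oja_flow_global_solution_bounded
    (d m : ℕ) (hm : m ≤ d) (A : Matrix (Fin d) (Fin d) ℝ) (hA : A.IsSymm)
    (l : ℝ) (hl : 0 ≤ l) (W0 : Matrix (Fin d) (Fin m) ℝ) :
    ∃ W : ℝ → Matrix (Fin d) (Fin m) ℝ,
      (W 0 = W0 ∧ ∀ t ∈ Ici (0:ℝ), ∀ i j,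
        HasDerivWithinAt (fun s => W s i j)
          (((2:ℝ) • ((A - W t * (W t)ᵀ) * W t) - (2 * l) • W t) i j) (Ici 0) t) ∧
      (∀ V : ℝ → Matrix (Fin d) (Fin m) ℝ,
        (V 0 = W0 ∧ ∀ t ∈ Ici (0:ℝ), ∀ i j,
          HasDerivWithinAt (fun s => V s i j)
            (((2:ℝ) • ((A - V t * (V t)ᵀ) * V t) - (2 * l) • V t) i j) (Ici 0) t) →
        ∀ t ∈ Ici (0:ℝ), V t = W t) ∧
      (∃ Cb : ℝ, ∀ t ∈ Ici (0:ℝ), frobNorm (W t) ≤ Cb) := by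
  classical
  rcases Nat.eq_zero_or_pos m with hm0 | hm0
  · subst hm0
    refine ⟨fun _ => W0, ⟨rfl, ?_⟩, ?_, ⟨frobNorm W0, ?_⟩⟩
    · intro t _ i j
      exact j.elim0
    · intro V _ t _
      funext i j
      exact j.elim0
    · intro t _
      exact le_rfl
  · set x₀ := (eqv d m).symm W0 with hx₀def
    obtain ⟨x, hx0, hxD, hxB⟩ := OjaAux.main hm0 A hl x₀
    refine ⟨fun t => eqv d m (x t), ⟨?_, ?_⟩, ?_, ?_⟩
    · show eqv d m (x 0) = W0
      rw [hx0]
      exact (eqv d m).apply_symm_apply W0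
    · intro t ht i j
      exact OjaAux.deriv_to_coords A l x t (hxD t ht) i j
    · intro V hV t ht
      obtain ⟨hV0, hVD⟩ := hV
      set y := fun s => (eqv d m).symm (V s) with hydef
      have hyD : ∀ s ∈ Ici (0:ℝ), HasDerivWithinAt y (eField A l (y s)) (Ici 0) s :=
        fun s hs => OjaAux.coords_to_deriv A l V s (hVD s hs)
      have h0 : y 0 = x 0 := by
        show (eqv d m).symm (V 0) = x 0
        rw [hV0, hx0]
      have huni := OjaAux.uniq A l y x hyD hxD h0 t ht
      have : V t = eqv d m (y t) := ((eqv d m).apply_symm_apply (V t)).symm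
      rw [this, huni]
    · refine ⟨Real.sqrt (max (‖x₀‖^2 + 1) (m * ∑ i, ∑ k, |A i k|)), ?_⟩
      intro t ht
      have hb := hxB t ht
      have hfrob : frobNorm (eqv d m (x t)) = ‖x t‖ := by
        rw [frobNorm, ← norm_sq_eq, Real.sqrt_sq (norm_nonneg _)]
      rw [hfrob]
      calc ‖x t‖ = Real.sqrt (‖x t‖^2) := (Real.sqrt_sq (norm_nonneg _)).symm
        _ ≤ _ := Real.sqrt_le_sqrt hb
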